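/- One iteration of the parallel subgradient method: Let f_1,…,f_K : H → [0,∞) be convex continuous on a real Hilbert space H, C ⊂ H nonempty closed convex, with ‖g‖ ≤ M_i for all x ∈ C, g ∈ ∂f_i(x), and M := ∑_i M_i. Given x ∈ C and λ_i ∈ [λ̲, λ̄] ⊂ (0,∞), define y_i := P_C(x − λ_i g_i) with g_i ∈ ∂f_i(x), and x⁺ := (1/K) ∑_{i=1}^K y_i. Then for all y ∈ C: ‖x⁺ − y‖² ≤ ‖x − y‖² − (2/K) ∑_{i=1}^K λ_i (f_i(x) − f_i(y)) + λ̄² M². -/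

import Mathlib

open Filter Topology Finset InnerProductSpace

/-- `g` is a subgradient of `f` at `x`. -/
def IsSubgrad {H : Type*} [NormedAddCommGroup H] [InnerProductSpace ℝ H]
    (f : H → ℝ) (x g : H) : Prop :=
  ∀ z : H, f x + ⟪z - x, g⟫_ℝ ≤ f z

/-- Firm-nonexpansiveness-type contraction for a metric projection onto a convex set. -/
lemma proj_contract {H : Type*} [NormedAddCommGroup H] [InnerProductSpace ℝ H]
    (C : Set H) (hCcv : Convex ℝ C) (P : H → H)
    (hP : ∀ u : H, P u ∈ C ∧ ∀ z ∈ C, ‖u - P u‖ ≤ ‖u - z‖)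
    (u : H) (z : H) (hz : z ∈ C) : ‖P u - z‖ ≤ ‖u - z‖ := by
  obtain ⟨hPu, hmin⟩ := hP u
  have hne : Nonempty C := ⟨⟨P u, hPu⟩⟩
  have heq : ‖u - P u‖ = ⨅ w : C, ‖u - w‖ := by
    refine le_antisymm (le_ciInf fun w => hmin w w.2) ?_
    have hbb : BddBelow (Set.range fun w : C => ‖u - (w : H)‖) := by
      refine ⟨0, ?_⟩
      rintro r ⟨w, rfl⟩
      exact norm_nonneg _
    exact ciInf_le hbb ⟨P u, hPu⟩
  have hvar : ⟪u - P u, z - P u⟫_ℝ ≤ 0 :=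
    (norm_eq_iInf_iff_real_inner_le_zero hCcv hPu).mp heq z hz
  have hsq : ‖P u - z‖ ^ 2 ≤ ‖u - z‖ ^ 2 := by
    have hdecomp : u - z = (u - P u) + (P u - z) := by abel
    rw [hdecomp, norm_add_sq_real]
    have hinner : 0 ≤ ⟪u - P u, P u - z⟫_ℝ := by
      have : ⟪u - P u, P u - z⟫_ℝ = -⟪u - P u, z - P u⟫_ℝ := by
        rw [← inner_neg_right, neg_sub]
      linarith [hvar, this]
    nlinarith [sq_nonneg ‖u - P u‖, norm_nonneg (u - P u)]
  nlinarith [hsq, norm_nonneg (P u - z), norm_nonneg (u - z)]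

theorem parallel_step_inequality {H : Type*} [NormedAddCommGroup H] [InnerProductSpace ℝ H]
    [CompleteSpace H] (C : Set H) (hCne : C.Nonempty) (hCcl : IsClosed C) (hCcv : Convex ℝ C)
    (P : H → H) (hP : ∀ u : H, P u ∈ C ∧ ∀ z ∈ C, ‖u - P u‖ ≤ ‖u - z‖)
    (K : ℕ) (hK : 0 < K)
    (f : ℕ → H → ℝ) (hfnn : ∀ i x, 0 ≤ f i x)
    (hfconv : ∀ i, ConvexOn ℝ Set.univ (f i)) (hfcont : ∀ i, Continuous (f i))
    (Mi : ℕ → ℝ) (hMi : ∀ i, 0 < Mi i)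
    (hbdd : ∀ i, 1 ≤ i → i ≤ K → ∀ x ∈ C, ∀ g : H, IsSubgrad (f i) x g → ‖g‖ ≤ Mi i)
    (lo hi : ℝ) (hlo : 0 < lo) (hlohi : lo ≤ hi)
    (x : H) (hx : x ∈ C)
    (lam : ℕ → ℝ) (hlam : ∀ i, 1 ≤ i → i ≤ K → lam i ∈ Set.Icc lo hi)
    (g : ℕ → H) (hg : ∀ i, 1 ≤ i → i ≤ K → IsSubgrad (f i) x (g i))
    (xplus : H) (hxplus : xplus = (K : ℝ)⁻¹ • ∑ i ∈ Finset.Icc 1 K, P (x - lam i • g i)) :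
    ∀ z ∈ C,
      ‖xplus - z‖ ^ 2 ≤ ‖x - z‖ ^ 2 -
        (2 / (K : ℝ)) * ∑ i ∈ Finset.Icc 1 K, lam i * (f i x - f i z) +
        hi ^ 2 * (∑ i ∈ Finset.Icc 1 K, Mi i) ^ 2 := by
  intro z hz
  have hKpos : (0 : ℝ) < K := by exact_mod_cast hK
  set s : Finset ℕ := Finset.Icc 1 K with hs
  have hcard : (s.card : ℝ) = K := by simp [hs]
  set y : ℕ → H := fun i => P (x - lam i • g i) with hy
  -- per-index inequality
  have key : ∀ i ∈ s, ‖y i - z‖ ^ 2 ≤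
      ‖x - z‖ ^ 2 - 2 * (lam i * (f i x - f i z)) + hi ^ 2 * Mi i ^ 2 := by
    intro i hi'
    rw [hs, Finset.mem_Icc] at hi'
    obtain ⟨h1, h2⟩ := hi'
    have hlam' := hlam i h1 h2
    have hlam0 : 0 < lam i := lt_of_lt_of_le hlo hlam'.1
    have hsub := hg i h1 h2
    have hgb : ‖g i‖ ≤ Mi i := hbdd i h1 h2 x hx (g i) hsub
    have hstep1 : ‖y i - z‖ ≤ ‖x - lam i • g i - z‖ :=
      proj_contract C hCcv P hP _ z hz
    have hstep1' : ‖y i - z‖ ^ 2 ≤ ‖x - lam i • g i - z‖ ^ 2 :=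
      pow_le_pow_left₀ (norm_nonneg _) hstep1 2
    have hexp : ‖x - lam i • g i - z‖ ^ 2 =
        ‖x - z‖ ^ 2 - 2 * (lam i * ⟪x - z, g i⟫_ℝ) + lam i ^ 2 * ‖g i‖ ^ 2 := by
      have : x - lam i • g i - z = (x - z) - lam i • g i := by abel
      rw [this, norm_sub_sq_real, real_inner_smul_right, norm_smul]
      rw [Real.norm_eq_abs, mul_pow, sq_abs]
    have hsg : f i x - f i z ≤ ⟪x - z, g i⟫_ℝ := by
      have := hsub z
      have hflip : ⟪z - x, g i⟫_ℝ = -⟪x - z, g i⟫_ℝ := by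
        rw [← inner_neg_left, neg_sub]
      linarith [this, hflip.le, hflip.ge]
    have hlamb : lam i ^ 2 * ‖g i‖ ^ 2 ≤ hi ^ 2 * Mi i ^ 2 := by
      have h1' : lam i ^ 2 ≤ hi ^ 2 :=
        pow_le_pow_left₀ hlam0.le hlam'.2 2
      have h2' : ‖g i‖ ^ 2 ≤ Mi i ^ 2 := pow_le_pow_left₀ (norm_nonneg _) hgb 2
      exact mul_le_mul h1' h2' (by positivity) (by positivity)
    calc ‖y i - z‖ ^ 2 ≤ ‖x - lam i • g i - z‖ ^ 2 := hstep1'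
      _ = ‖x - z‖ ^ 2 - 2 * (lam i * ⟪x - z, g i⟫_ℝ) + lam i ^ 2 * ‖g i‖ ^ 2 := hexp
      _ ≤ ‖x - z‖ ^ 2 - 2 * (lam i * (f i x - f i z)) + hi ^ 2 * Mi i ^ 2 := by
          nlinarith [hsg, hlam0, hlamb]
  -- convexity of the squared norm
  have hrw : xplus - z = (K : ℝ)⁻¹ • ∑ i ∈ s, (y i - z) := by
    rw [hxplus, Finset.sum_sub_distrib, smul_sub]
    congr 1
    rw [Finset.sum_const, ← hcard]
    rw [← Nat.cast_smul_eq_nsmul ℝ, smul_smul, inv_mul_cancel₀ (by rw [hcard]; exact hKpos.ne'),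
      one_smul]
  have hnorm1 : ‖xplus - z‖ ≤ (K : ℝ)⁻¹ * ∑ i ∈ s, ‖y i - z‖ := by
    rw [hrw, norm_smul, Real.norm_eq_abs, abs_of_nonneg (by positivity)]
    exact mul_le_mul_of_nonneg_left (norm_sum_le _ _) (by positivity)
  have hcs : (∑ i ∈ s, ‖y i - z‖) ^ 2 ≤ (K : ℝ) * ∑ i ∈ s, ‖y i - z‖ ^ 2 := by
    have := sq_sum_le_card_mul_sum_sq (s := s) (f := fun i => ‖y i - z‖)
    rw [← hcard]; exact_mod_cast this
  have hsq : ‖xplus - z‖ ^ 2 ≤ (K : ℝ)⁻¹ * ∑ i ∈ s, ‖y i - z‖ ^ 2 := by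
    have h1 : ‖xplus - z‖ ^ 2 ≤ ((K : ℝ)⁻¹ * ∑ i ∈ s, ‖y i - z‖) ^ 2 :=
      pow_le_pow_left₀ (norm_nonneg _) hnorm1 2
    calc ‖xplus - z‖ ^ 2 ≤ ((K : ℝ)⁻¹ * ∑ i ∈ s, ‖y i - z‖) ^ 2 := h1
      _ = (K : ℝ)⁻¹ ^ 2 * (∑ i ∈ s, ‖y i - z‖) ^ 2 := by ring
      _ ≤ (K : ℝ)⁻¹ ^ 2 * ((K : ℝ) * ∑ i ∈ s, ‖y i - z‖ ^ 2) :=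
          mul_le_mul_of_nonneg_left hcs (by positivity)
      _ = (K : ℝ)⁻¹ * ∑ i ∈ s, ‖y i - z‖ ^ 2 := by
          field_simp
  have hsum : ∑ i ∈ s, ‖y i - z‖ ^ 2 ≤
      ∑ i ∈ s, (‖x - z‖ ^ 2 - 2 * (lam i * (f i x - f i z)) + hi ^ 2 * Mi i ^ 2) :=
    Finset.sum_le_sum key
  have hexpand : (K : ℝ)⁻¹ * ∑ i ∈ s, (‖x - z‖ ^ 2 - 2 * (lam i * (f i x - f i z)) +
      hi ^ 2 * Mi i ^ 2) = ‖x - z‖ ^ 2 - (2 / (K : ℝ)) * ∑ i ∈ s, lam i * (f i x - f i z) +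
      (K : ℝ)⁻¹ * hi ^ 2 * ∑ i ∈ s, Mi i ^ 2 := by
    rw [Finset.sum_add_distrib, Finset.sum_sub_distrib, Finset.sum_const, ← hcard]
    rw [← Finset.mul_sum, ← Finset.mul_sum, nsmul_eq_mul]
    push_cast
    field_simp
  have hMsum : (K : ℝ)⁻¹ * hi ^ 2 * ∑ i ∈ s, Mi i ^ 2 ≤ hi ^ 2 * (∑ i ∈ s, Mi i) ^ 2 := by
    have h1 : ∑ i ∈ s, Mi i ^ 2 ≤ (∑ i ∈ s, Mi i) ^ 2 :=
      Finset.sum_sq_le_sq_sum_of_nonneg fun i _ => (hMi i).le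
    have hKinv : (K : ℝ)⁻¹ ≤ 1 := by
      rw [inv_le_one_iff₀]; right; exact_mod_cast hK
    have hnn : 0 ≤ ∑ i ∈ s, Mi i ^ 2 := Finset.sum_nonneg fun i _ => sq_nonneg _
    calc (K : ℝ)⁻¹ * hi ^ 2 * ∑ i ∈ s, Mi i ^ 2 ≤ 1 * hi ^ 2 * ∑ i ∈ s, Mi i ^ 2 := by
          apply mul_le_mul_of_nonneg_right _ hnn
          exact mul_le_mul_of_nonneg_right hKinv (sq_nonneg _)
      _ = hi ^ 2 * ∑ i ∈ s, Mi i ^ 2 := by ring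
      _ ≤ hi ^ 2 * (∑ i ∈ s, Mi i) ^ 2 := mul_le_mul_of_nonneg_left h1 (sq_nonneg _)
  calc ‖xplus - z‖ ^ 2 ≤ (K : ℝ)⁻¹ * ∑ i ∈ s, ‖y i - z‖ ^ 2 := hsq
    _ ≤ (K : ℝ)⁻¹ * ∑ i ∈ s, (‖x - z‖ ^ 2 - 2 * (lam i * (f i x - f i z)) +
        hi ^ 2 * Mi i ^ 2) := mul_le_mul_of_nonneg_left hsum (by positivity)
    _ = ‖x - z‖ ^ 2 - (2 / (K : ℝ)) * ∑ i ∈ s, lam i * (f i x - f i z) +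
        (K : ℝ)⁻¹ * hi ^ 2 * ∑ i ∈ s, Mi i ^ 2 := hexpand
    _ ≤ ‖x - z‖ ^ 2 - (2 / (K : ℝ)) * ∑ i ∈ s, lam i * (f i x - f i z) +
        hi ^ 2 * (∑ i ∈ s, Mi i) ^ 2 := by linarith
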